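/- arXiv:2601.11959 — 2 statements merged into one kernel-verified Lean document; each statement's English description precedes it below -/
import Mathlib

section
/- Let A = SJS⁻¹ where J is a Jordan canonical form, and let z ∈ ℂ whose distance to every eigenvalue of A is at least a > 1. Then ‖(zI − A)⁻¹‖ ≤ κ_S · (1 − a^{−N})/(a − 1), where κ_S = ‖S‖‖S⁻¹‖ and N is the dimension. -/
open scoped Matrix.Norms.L2Operator


open Matrix in
private lemma rb_norm_le {n : Type*} [Fintype n] [DecidableEq n] (M : Matrix n n ℂ) (c : ℝ)
    (hc : 0 ≤ c) (h : ∀ x : EuclideanSpace ℂ n, ‖(toEuclideanCLM (𝕜 := ℂ) M) x‖ ≤ c * ‖x‖) :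
    ‖M‖ ≤ c := by
  have e : ‖M‖ = ‖toEuclideanCLM (𝕜 := ℂ) M‖ := rfl
  rw [e]
  exact ContinuousLinearMap.opNorm_le_bound _ hc h

open Matrix in
private lemma rb_diag_norm_le {n : Type*} [Fintype n] [DecidableEq n] (v : n → ℂ) (c : ℝ)
    (hc : 0 ≤ c) (h : ∀ i, ‖v i‖ ≤ c) : ‖Matrix.diagonal v‖ ≤ c := by
  apply rb_norm_le _ _ hc
  intro x
  have hco : ∀ i, (toEuclideanCLM (𝕜 := ℂ) (Matrix.diagonal v) x) i = v i * x i := by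
    intro i
    rw [show (toEuclideanCLM (𝕜 := ℂ) (Matrix.diagonal v) x) i
        = (Matrix.diagonal v).mulVec x i from rfl, Matrix.mulVec_diagonal]
  rw [EuclideanSpace.norm_eq, EuclideanSpace.norm_eq, ← Real.sqrt_sq hc, ← Real.sqrt_mul (sq_nonneg c)]
  apply Real.sqrt_le_sqrt
  rw [Finset.mul_sum]
  apply Finset.sum_le_sum
  intro i _
  rw [hco i, norm_mul, mul_pow, ← mul_pow]
  have h2 : ‖v i‖ * ‖x i‖ ≤ c * ‖x i‖ := mul_le_mul_of_nonneg_right (h i) (norm_nonneg _)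
  calc (‖v i‖ * ‖x i‖) ^ 2 ≤ (c * ‖x i‖)^2 := by
        apply pow_le_pow_left₀ (by positivity) h2
    _ = c ^ 2 * ‖x i‖ ^ 2 := by ring

open Matrix in
private lemma rb_superdiag_norm_le {N : ℕ} (M : Matrix (Fin N) (Fin N) ℂ) (c : ℝ) (hc : 0 ≤ c)
    (hshape : ∀ i j : Fin N, (j : ℕ) ≠ (i : ℕ) + 1 → M i j = 0)
    (hent : ∀ i j : Fin N, ‖M i j‖ ≤ c) : ‖M‖ ≤ c := by
  apply rb_norm_le _ _ hc
  intro x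
  have hco : ∀ i, (toEuclideanCLM (𝕜 := ℂ) M x) i = ∑ j : Fin N, M i j * x j := by
    intro i
    rw [show (toEuclideanCLM (𝕜 := ℂ) M x) i = M.mulVec x i from rfl]
    simp [Matrix.mulVec, dotProduct]
  rw [EuclideanSpace.norm_eq, EuclideanSpace.norm_eq, ← Real.sqrt_sq hc,
    ← Real.sqrt_mul (sq_nonneg c)]
  apply Real.sqrt_le_sqrt
  have step1 : ∀ i : Fin N, ‖(toEuclideanCLM (𝕜 := ℂ) M x) i‖ ^ 2
      ≤ ∑ j : Fin N, (if (j : ℕ) = (i : ℕ) + 1 then c ^ 2 * ‖x j‖ ^ 2 else 0) := by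
    intro i
    rw [hco i]
    by_cases hi : (i : ℕ) + 1 < N
    · set j₀ : Fin N := ⟨(i : ℕ) + 1, hi⟩ with hj₀
      have hiff : ∀ j : Fin N, ((j : ℕ) = (i : ℕ) + 1) ↔ j = j₀ := by
        intro j
        constructor
        · intro h; exact Fin.ext h
        · intro h; rw [h]
      have h1 : ∑ j : Fin N, M i j * x j = M i j₀ * x j₀ := by
        apply Finset.sum_eq_single j₀
        · intro j _ hj
          rw [hshape i j (fun h => hj ((hiff j).mp h))]
          ring
        · intro h; exact absurd (Finset.mem_univ _) h
      have h2 : ∑ j : Fin N, (if (j : ℕ) = (i : ℕ) + 1 then c ^ 2 * ‖x j‖ ^ 2 else 0)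
          = c ^ 2 * ‖x j₀‖ ^ 2 := by
        rw [Finset.sum_congr rfl (fun j _ => if_congr (hiff j) rfl rfl)]
        simp
      rw [h1, h2, norm_mul, mul_pow]
      have h3 : ‖M i j₀‖ ^ 2 ≤ c ^ 2 := pow_le_pow_left₀ (norm_nonneg _) (hent i j₀) 2
      exact mul_le_mul_of_nonneg_right h3 (sq_nonneg _)
    · have h1 : ∑ j : Fin N, M i j * x j = 0 := by
        apply Finset.sum_eq_zero
        intro j _
        rw [hshape i j (by omega)]
        ring
      rw [h1]
      simp only [norm_zero]
      rw [zero_pow (by norm_num)]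
      apply Finset.sum_nonneg
      intro j _
      split <;> positivity
  calc ∑ i, ‖(toEuclideanCLM (𝕜 := ℂ) M x) i‖ ^ 2
      ≤ ∑ i : Fin N, ∑ j : Fin N, (if (j : ℕ) = (i : ℕ) + 1 then c ^ 2 * ‖x j‖ ^ 2 else 0) :=
        Finset.sum_le_sum (fun i _ => step1 i)
    _ = ∑ j : Fin N, ∑ i : Fin N, (if (j : ℕ) = (i : ℕ) + 1 then c ^ 2 * ‖x j‖ ^ 2 else 0) :=
        Finset.sum_comm
    _ ≤ ∑ j : Fin N, c ^ 2 * ‖x j‖ ^ 2 := by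
        apply Finset.sum_le_sum
        intro j _
        by_cases hj : 0 < (j : ℕ)
        · have hj1 : (j : ℕ) - 1 < N := by omega
          set i₀ : Fin N := ⟨(j : ℕ) - 1, hj1⟩ with hi₀
          have hiff : ∀ i : Fin N, ((j : ℕ) = (i : ℕ) + 1) ↔ i = i₀ := by
            intro i
            constructor
            · intro h; apply Fin.ext; simp only [hi₀]; omega
            · intro h; rw [h]; simp only [hi₀]; omega
          rw [Finset.sum_congr rfl (fun i _ => if_congr (hiff i) rfl rfl)]
          simp
        · have : ∑ i : Fin N, (if (j : ℕ) = (i : ℕ) + 1 then c ^ 2 * ‖x j‖ ^ 2 else 0) = 0 := by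
            apply Finset.sum_eq_zero
            intro i _
            rw [if_neg (by omega)]
          rw [this]
          positivity
    _ = c ^ 2 * ∑ j, ‖x j‖ ^ 2 := by rw [Finset.mul_sum]

/-- Resolvent bound via the Jordan canonical form: if `A = S J S⁻¹` with `J` a
Jordan matrix and `z` at distance at least `a > 1` from every eigenvalue
(i.e. from every diagonal entry of `J`), then
`‖(zI − A)⁻¹‖ ≤ κ_S (1 − a^{−N})/(a − 1)` where `κ_S = ‖S‖‖S⁻¹‖`. -/
theorem resolvent_bound_jordan {N : ℕ} (A S J : Matrix (Fin N) (Fin N) ℂ)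
    (hS : IsUnit S) (hA : A = S * J * S⁻¹)
    -- `J` is a Jordan canonical form: bidiagonal, with superdiagonal entries in {0,1},
    -- and a superdiagonal `1` only joins equal diagonal (eigenvalue) entries
    (hJ0 : ∀ i j : Fin N, (j : ℕ) ≠ (i : ℕ) → (j : ℕ) ≠ (i : ℕ) + 1 → J i j = 0)
    (hJ1 : ∀ i j : Fin N, (j : ℕ) = (i : ℕ) + 1 → J i j = 0 ∨ J i j = 1)
    (hJblock : ∀ i j : Fin N, (j : ℕ) = (i : ℕ) + 1 → J i j = 1 → J i i = J j j)
    (z : ℂ) (a : ℝ) (ha : 1 < a)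
    (hdist : ∀ i : Fin N, a ≤ ‖z - J i i‖) :
    IsUnit (z • (1 : Matrix (Fin N) (Fin N) ℂ) - A) ∧
      ‖(z • (1 : Matrix (Fin N) (Fin N) ℂ) - A)⁻¹‖
        ≤ ‖S‖ * ‖S⁻¹‖ * ((1 - a⁻¹ ^ N) / (a - 1)) := by
  have ha0 : (0 : ℝ) < a := lt_trans one_pos ha
  rcases Nat.eq_zero_or_pos N with hN | hN
  · subst hN
    refine ⟨isUnit_of_subsingleton _, ?_⟩
    have h0 : (z • (1 : Matrix (Fin 0) (Fin 0) ℂ) - A)⁻¹ = 0 := Subsingleton.elim _ _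
    rw [h0, norm_zero]
    simp
  -- main case
  have hS' : IsUnit S.det := (Matrix.isUnit_iff_isUnit_det S).mp hS
  set d : Fin N → ℂ := fun i => z - J i i with hd_def
  have hdnorm : ∀ i, a ≤ ‖d i‖ := by
    intro i
    simp only [hd_def]
    exact hdist i
  have hd0 : ∀ i, d i ≠ 0 := by
    intro i h
    have h2 := hdnorm i
    rw [h, norm_zero] at h2
    linarith
  set D := Matrix.diagonal d with hD
  set Dinv := Matrix.diagonal (fun i => (d i)⁻¹) with hDinv
  have hDDinv : D * Dinv = 1 := by
    ext i j
    rw [hD, hDinv, Matrix.diagonal_mul_diagonal]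
    by_cases h : i = j
    · subst h
      simp [Matrix.diagonal_apply_eq, mul_inv_cancel₀ (hd0 i)]
    · simp [Matrix.diagonal_apply_ne _ h, Matrix.one_apply_ne h]
  set B : Matrix (Fin N) (Fin N) ℂ :=
    Matrix.of (fun i j => if (j : ℕ) = (i : ℕ) + 1 then -((d i)⁻¹ * J i j) else 0) with hB
  have hBshape : ∀ i j : Fin N, (j : ℕ) ≠ (i : ℕ) + 1 → B i j = 0 := by
    intro i j h
    simp [hB, Matrix.of_apply, if_neg h]
  have hBent : ∀ i j : Fin N, ‖B i j‖ ≤ a⁻¹ := by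
    intro i j
    rw [hB]
    simp only [Matrix.of_apply]
    split
    case isTrue h =>
      rw [norm_neg, norm_mul, norm_inv]
      have hJle : ‖J i j‖ ≤ 1 := by rcases hJ1 i j h with h' | h' <;> simp [h']
      have h1 : ‖d i‖⁻¹ ≤ a⁻¹ := inv_anti₀ ha0 (hdnorm i)
      calc ‖d i‖⁻¹ * ‖J i j‖ ≤ a⁻¹ * 1 :=
            mul_le_mul h1 hJle (norm_nonneg _) (by positivity)
        _ = a⁻¹ := mul_one _
    case isFalse h => simp; positivity
  have hBnorm : ‖B‖ ≤ a⁻¹ := rb_superdiag_norm_le B a⁻¹ (by positivity) hBshape hBent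
  have hMdec : z • (1 : Matrix (Fin N) (Fin N) ℂ) - J = D * (1 + B) := by
    ext i j
    simp only [Matrix.sub_apply, Matrix.smul_apply, Matrix.one_apply, hD, Matrix.diagonal_mul,
      Matrix.add_apply, hB, Matrix.of_apply, smul_eq_mul]
    by_cases hij : i = j
    · subst hij
      have hne : ¬((i : ℕ) = (i : ℕ) + 1) := by omega
      simp [hne, hd_def]
    · have hvij : (j : ℕ) ≠ (i : ℕ) := fun h => hij (Fin.ext h.symm)
      by_cases h2 : (j : ℕ) = (i : ℕ) + 1
      · simp only [if_pos h2, if_neg hij]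
        have : d i * (d i)⁻¹ = 1 := mul_inv_cancel₀ (hd0 i)
        field_simp [hd0 i]
        ring
      · simp [if_neg h2, if_neg hij, hJ0 i j hvij h2]
  have hBpow : ∀ (k : ℕ) (i j : Fin N), (j : ℕ) ≠ (i : ℕ) + k → (B ^ k) i j = 0 := by
    intro k
    induction k with
    | zero =>
      intro i j h
      rw [pow_zero]
      exact Matrix.one_apply_ne fun e => h (by simp [← e])
    | succ k ih =>
      intro i j h
      rw [pow_succ, Matrix.mul_apply]
      apply Finset.sum_eq_zero
      intro l _
      by_cases hl : (l : ℕ) = (i : ℕ) + k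
      · rw [hBshape l j (by omega)]; ring
      · rw [ih i l hl]; ring
  have hBN : B ^ N = 0 := by
    ext i j
    rw [hBpow N i j (by omega)]
    simp
  set G := ∑ k ∈ Finset.range N, (-B) ^ k with hG
  have hGinv : (1 + B) * G = 1 := by
    have h1 : ((-B) - 1) * G = (-B) ^ N - 1 := mul_geom_sum (-B) N
    have h2 : (-B) ^ N = 0 := by rw [neg_pow, hBN, mul_zero]
    have h3 : (1 + B) = -((-B) - 1) := by rw [neg_sub, sub_neg_eq_add]
    rw [h3, neg_mul, h1, h2, zero_sub, neg_neg]
  have hMright : (z • (1 : Matrix (Fin N) (Fin N) ℂ) - J) * (G * Dinv) = 1 := by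
    rw [hMdec, mul_assoc, ← mul_assoc (1 + B) G Dinv, hGinv, one_mul, hDDinv]
  have hSS : S * S⁻¹ = 1 := Matrix.mul_nonsing_inv S hS'
  have hSSi : S⁻¹ * S = 1 := Matrix.nonsing_inv_mul S hS'
  have hZ : z • (1 : Matrix (Fin N) (Fin N) ℂ) - A = S * (z • (1 : Matrix (Fin N) (Fin N) ℂ) - J) * S⁻¹ := by
    have hsm : S * (z • (1 : Matrix (Fin N) (Fin N) ℂ)) * S⁻¹ = z • (1 : Matrix (Fin N) (Fin N) ℂ) := by
      rw [Matrix.mul_smul, mul_one, Matrix.smul_mul, hSS]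
    rw [hA, mul_sub, sub_mul, hsm]
  have hZR : (z • (1 : Matrix (Fin N) (Fin N) ℂ) - A) * (S * (G * Dinv) * S⁻¹) = 1 := by
    rw [hZ]
    have e1 : (S * (z • (1 : Matrix (Fin N) (Fin N) ℂ) - J) * S⁻¹) * (S * (G * Dinv) * S⁻¹)
        = S * (z • (1 : Matrix (Fin N) (Fin N) ℂ) - J) * (S⁻¹ * S) * (G * Dinv) * S⁻¹ := by
      simp only [Matrix.mul_assoc]
    rw [e1, hSSi, mul_one, mul_assoc S _ (G * Dinv), hMright, mul_one, hSS]
  have hZunit : IsUnit (z • (1 : Matrix (Fin N) (Fin N) ℂ) - A) := by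
    rw [Matrix.isUnit_iff_isUnit_det]
    have := congrArg Matrix.det hZR
    rw [Matrix.det_mul, Matrix.det_one] at this
    exact ⟨⟨_, _, this, by rw [mul_comm]; exact this⟩, rfl⟩
  have hZinv : (z • (1 : Matrix (Fin N) (Fin N) ℂ) - A)⁻¹ = S * (G * Dinv) * S⁻¹ :=
    Matrix.inv_eq_right_inv hZR
  -- norm bounds
  have hrpos : (0 : ℝ) < a⁻¹ := by positivity
  have hr1 : a⁻¹ < 1 := by
    rw [inv_eq_one_div]
    exact (div_lt_one ha0).mpr ha
  have h1 : ‖(1 : Matrix (Fin N) (Fin N) ℂ)‖ = 1 := by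
    haveI : Nonempty (Fin N) := Fin.pos_iff_nonempty.mp hN
    have e : ‖(1 : Matrix (Fin N) (Fin N) ℂ)‖
        = ‖Matrix.toEuclideanCLM (𝕜 := ℂ) (n := Fin N) 1‖ := rfl
    rw [e, _root_.map_one]
    exact ContinuousLinearMap.norm_id
  have hDinvnorm : ‖Dinv‖ ≤ a⁻¹ := by
    rw [hDinv]
    apply rb_diag_norm_le _ _ (le_of_lt hrpos)
    intro i
    rw [norm_inv]
    exact inv_anti₀ ha0 (hdnorm i)
  have hpow : ∀ k : ℕ, ‖(-B) ^ k‖ ≤ a⁻¹ ^ k := by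
    intro k
    induction k with
    | zero => simp [h1]
    | succ k ih =>
      rw [pow_succ, pow_succ]
      calc ‖(-B) ^ k * (-B)‖ ≤ ‖(-B) ^ k‖ * ‖-B‖ := norm_mul_le _ _
        _ ≤ a⁻¹ ^ k * a⁻¹ := by
            apply mul_le_mul ih (by rw [norm_neg]; exact hBnorm) (norm_nonneg _) (by positivity)
  have hx1 : (a⁻¹ : ℝ) ≠ 1 := ne_of_lt hr1
  have hGnorm : ‖G‖ ≤ (1 - a⁻¹ ^ N) / (1 - a⁻¹) := by
    calc ‖G‖ ≤ ∑ k ∈ Finset.range N, ‖(-B) ^ k‖ := norm_sum_le _ _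
      _ ≤ ∑ k ∈ Finset.range N, a⁻¹ ^ k := Finset.sum_le_sum fun k _ => hpow k
      _ = (1 - a⁻¹ ^ N) / (1 - a⁻¹) := by
          rw [geom_sum_eq hx1 N, ← neg_div_neg_eq, neg_sub, neg_sub]
  have hGDnonneg : (0 : ℝ) ≤ (1 - a⁻¹ ^ N) / (1 - a⁻¹) := by
    apply div_nonneg
    · have : a⁻¹ ^ N ≤ 1 := pow_le_one₀ (le_of_lt hrpos) (le_of_lt hr1)
      linarith
    · linarith
  have hGD : ‖G * Dinv‖ ≤ (1 - a⁻¹ ^ N) / (a - 1) := by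
    calc ‖G * Dinv‖ ≤ ‖G‖ * ‖Dinv‖ := norm_mul_le _ _
      _ ≤ ((1 - a⁻¹ ^ N) / (1 - a⁻¹)) * a⁻¹ :=
          mul_le_mul hGnorm hDinvnorm (norm_nonneg _) hGDnonneg
      _ = (1 - a⁻¹ ^ N) / (a - 1) := by
          have hane : a ≠ 0 := ne_of_gt ha0
          have ha1 : a - 1 ≠ 0 := by intro h; linarith [ha]
          field_simp
  refine ⟨hZunit, ?_⟩
  rw [hZinv]
  calc ‖S * (G * Dinv) * S⁻¹‖ ≤ ‖S * (G * Dinv)‖ * ‖S⁻¹‖ := norm_mul_le _ _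
    _ ≤ (‖S‖ * ‖G * Dinv‖) * ‖S⁻¹‖ :=
        mul_le_mul_of_nonneg_right (norm_mul_le _ _) (norm_nonneg _)
    _ = ‖S‖ * ‖S⁻¹‖ * ‖G * Dinv‖ := by ring
    _ ≤ ‖S‖ * ‖S⁻¹‖ * ((1 - a⁻¹ ^ N) / (a - 1)) :=
        mul_le_mul_of_nonneg_left hGD (by positivity)
end

section
/- Let c = (c₀,…,c_{K−1}) ∈ ℂ^K, let U_i be unitaries on ℂ^{2ⁿ}, and let V, Ṽ be unitaries on ℂ^K whose first column and first row respectively equal (√c₀,…,√c_{K−1})ᵀ/√‖c‖₁ and (√c₀,…,√c_{K−1})/√‖c‖₁, with √c_i = √r_i e^{iθ_i/2} for c_i = r_i e^{iθ_i}. Let U = Σ_i |i⟩⟨i| ⊗ U_i. Then W = (Ṽ ⊗ I)U(V ⊗ I) satisfies (⟨0|⊗I) W (|0⟩⊗I) = (1/‖c‖₁) Σ_{i=0}^{K−1} c_i U_i; i.e., W is a (‖c‖₁, log K, 0)-block-encoding of Σ c_i U_i. -/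
open scoped Matrix Kronecker

/-- The LCU lemma with complex coefficients: with prepare oracles `V, Ṽ` whose
first column/row is `(√c_i)/√‖c‖₁` and select oracle `U = Σ_i |i⟩⟨i| ⊗ U_i`,
the circuit `W = (Ṽ ⊗ I) U (V ⊗ I)` is a `(‖c‖₁, log K, 0)`-block-encoding of
`Σ_i c_i U_i`, i.e. `(⟨0| ⊗ I) W (|0⟩ ⊗ I) = (1/‖c‖₁) Σ_i c_i U_i`. -/
theorem lcu_block_encoding {K D : ℕ} [NeZero K]
    (c : Fin K → ℂ) (s : Fin K → ℂ) (hs : ∀ i, s i ^ 2 = c i)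
    (cn : ℝ) (hcn : cn = ∑ i, ‖c i‖) (hcpos : 0 < cn)
    (U : Fin K → Matrix (Fin D) (Fin D) ℂ)
    (hU : ∀ i, U i ∈ Matrix.unitaryGroup (Fin D) ℂ)
    (V Vt : Matrix (Fin K) (Fin K) ℂ)
    (hV : V ∈ Matrix.unitaryGroup (Fin K) ℂ)
    (hVt : Vt ∈ Matrix.unitaryGroup (Fin K) ℂ)
    (hVcol : ∀ i, V i 0 = s i / (Real.sqrt cn : ℂ))
    (hVtrow : ∀ i, Vt 0 i = s i / (Real.sqrt cn : ℂ))
    (SEL : Matrix (Fin K × Fin D) (Fin K × Fin D) ℂ)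
    (hSEL : ∀ p q, SEL p q = if p.1 = q.1 then U p.1 p.2 q.2 else 0) :
    ∀ j k : Fin D,
      ((Vt ⊗ₖ (1 : Matrix (Fin D) (Fin D) ℂ)) * SEL *
          (V ⊗ₖ (1 : Matrix (Fin D) (Fin D) ℂ))) (0, j) (0, k)
        = (cn : ℂ)⁻¹ * ∑ i, c i * U i j k := by
  intro j k
  have hsq : (Real.sqrt cn : ℂ) * (Real.sqrt cn : ℂ) = (cn : ℂ) := by
    rw [← Complex.ofReal_mul, Real.mul_self_sqrt hcpos.le]
  simp only [Matrix.mul_apply, Matrix.kroneckerMap_apply, hSEL, Matrix.one_apply,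
    Fintype.sum_prod_type]
  simp only [mul_ite, mul_zero, ite_mul, zero_mul, Finset.sum_ite_eq,
    Finset.sum_ite_eq', Finset.mem_univ, if_true]
  rw [Finset.mul_sum]
  refine Finset.sum_congr rfl fun a _ => ?_
  rw [Finset.sum_comm]
  simp only [Finset.sum_ite_eq', Finset.sum_ite_eq, Finset.mem_univ, if_true]
  rw [hVcol, hVtrow]
  have hc : c a = s a * s a := by rw [← hs a]; ring
  have hne : (Real.sqrt cn : ℂ) ≠ 0 := by
    simpa using Complex.ofReal_ne_zero.mpr (Real.sqrt_ne_zero'.mpr hcpos)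
  field_simp [hc]
  rw [pow_two (Real.sqrt cn : ℂ), hsq, hs a, eq_div_iff (show (cn:ℂ) ≠ 0 by exact_mod_cast hcpos.ne')]
  ring
end
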